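/- Let a : Fin n → ℝ^d be a point configuration and let [X1,Y1], [X2,Y2] be tiles (X_j ⊆ Y_j ⊆ Fin n). Then the following are equivalent: (i) there exists an affine map f : ℝ^d → ℝ with f (a i) > 0 for all i ∈ (X1 \ X2) ∪ (Y1 \ Y2), f (a i) < 0 for all i ∈ (X2 \ X1) ∪ (Y2 \ Y1), and f (a i) = 0 for all i ∈ (Y1 ∩ Y2) \ (X1 ∪ X2); (ii) there is no λ : Fin n → ℝ, not identically zero, with Σ_i λ i = 0 and Σ_i λ i • a i = 0, such that {i : λ i > 0} ⊆ Y1 \ X2, {i : λ i < 0} ⊆ Y2 \ X1, and λ i ≠ 0 for some i ∉ (Y1 ∩ Y2) \ (X1 ∪ X2). (Condition (ii) is the nonexistence of a circuit (C⁺,C⁻) of A with C⁺ ⊆ Y1\X2, C⁻ ⊆ Y2\X1 and C⁺∪C⁻ not contained in (Y1∩Y2)\(X1∪X2), i.e. the definition of the tiles being separated; (i) is the covector characterization of separation.) -/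

import Mathlib

set_option maxHeartbeats 1000000 in
open Finset

lemma motzkin_aux {n k : ℕ} (b : Fin n → EuclideanSpace ℝ (Fin k))
    (P N Z : Finset (Fin n)) (hPN : Disjoint P N) (hPZ : Disjoint P Z) (hNZ : Disjoint N Z) :
    (∃ h : EuclideanSpace ℝ (Fin k) →L[ℝ] ℝ,
      (∀ i ∈ P, 0 < h (b i)) ∧ (∀ i ∈ N, h (b i) < 0) ∧ (∀ i ∈ Z, h (b i) = 0)) ∨
    (∃ lam : Fin n → ℝ, (∑ i, lam i • b i) = 0 ∧
      (∀ i, 0 < lam i → i ∈ P ∨ i ∈ Z) ∧ (∀ i, lam i < 0 → i ∈ N ∨ i ∈ Z) ∧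
      (∃ i, (i ∈ P ∨ i ∈ N) ∧ lam i ≠ 0 ∧ i ∉ Z)) := by
  classical
  let E := EuclideanSpace ℝ (Fin k)
  set V := Submodule.span ℝ (b '' (Z : Set (Fin n))) with hV
  let pv : E → E := fun x => (V.orthogonalProjectionOnto x : E)
  let v : Fin n → E := fun i => if i ∈ P then b i else -b i
  let u : Fin n → E := fun i => v i - pv (v i)
  set S := P ∪ N with hS
  by_cases h0 : (0 : E) ∈ convexHull ℝ (u '' (S : Set (Fin n)))
  · right
    -- extract a nonempty witness
    have hne : ∃ j₀, j₀ ∈ S := by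
      rcases Set.eq_empty_or_nonempty (u '' (S : Set (Fin n))) with he | ⟨y, j₀, hj₀, _⟩
      · rw [he, convexHull_empty] at h0; exact absurd h0 (Set.notMem_empty 0)
      · exact ⟨j₀, hj₀⟩
    obtain ⟨j₀, hj₀⟩ := hne
    rw [_root_.convexHull_eq] at h0
    obtain ⟨ι, t, w, z, hw0, hw1, hz, hcm⟩ := h0
    have hz' : ∀ i : ι, ∃ j : Fin n, i ∈ t → j ∈ S ∧ u j = z i := by
      intro i
      by_cases hi : i ∈ t
      · obtain ⟨j, hjS, hju⟩ := hz i hi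
        exact ⟨j, fun _ => ⟨hjS, hju⟩⟩
      · exact ⟨j₀, fun h => absurd h hi⟩
    choose gg hgg using hz'
    set μ : Fin n → ℝ := fun j => ∑ i ∈ t.filter (fun i => gg i = j), w i with hμ
    have hμ0 : ∀ j, 0 ≤ μ j := fun j =>
      Finset.sum_nonneg fun i hi => hw0 i (Finset.mem_filter.mp hi).1
    have hμS : ∀ j, j ∉ S → μ j = 0 := by
      intro j hj
      have hemp : t.filter (fun i => gg i = j) = ∅ :=
        Finset.filter_eq_empty_iff.mpr (fun i hi hgg' => hj (hgg' ▸ (hgg i hi).1))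
      simp [hμ, hemp]
    have hμsum : (∑ j, μ j) = 1 := by
      rw [hμ]
      rw [Finset.sum_fiberwise t gg w]
      exact hw1
    have hsum_smul : ∀ F : Fin n → E, (∑ j, μ j • F j) = ∑ i ∈ t, w i • F (gg i) := by
      intro F
      calc (∑ j, μ j • F j)
          = ∑ j : Fin n, ∑ i ∈ t.filter (fun i => gg i = j), w i • F j := by
            simp [hμ, Finset.sum_smul]
        _ = ∑ j : Fin n, ∑ i ∈ t.filter (fun i => gg i = j), w i • F (gg i) := by
            refine Finset.sum_congr rfl fun j _ => Finset.sum_congr rfl fun i hi => ?_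
            rw [(Finset.mem_filter.mp hi).2]
        _ = ∑ i ∈ t, w i • F (gg i) := Finset.sum_fiberwise t gg _
    have hug : ∀ i ∈ t, u (gg i) = z i := fun i hi => (hgg i hi).2
    have hμu : (∑ j, μ j • u j) = 0 := by
      rw [hsum_smul u]
      calc (∑ i ∈ t, w i • u (gg i)) = ∑ i ∈ t, w i • z i :=
            Finset.sum_congr rfl fun i hi => by rw [hug i hi]
        _ = 0 := by rw [← Finset.centerMass_eq_of_sum_1 _ _ hw1]; exact hcm
    have hqV : (∑ j, μ j • v j) ∈ V := by
      have hrw : (∑ j, μ j • v j) = ∑ j, μ j • pv (v j) := by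
        calc (∑ j, μ j • v j) = ∑ j, (μ j • u j + μ j • pv (v j)) := by
              refine Finset.sum_congr rfl fun j _ => ?_
              rw [← smul_add]
              congr 1
              simp [u]
          _ = (∑ j, μ j • u j) + ∑ j, μ j • pv (v j) := Finset.sum_add_distrib
          _ = ∑ j, μ j • pv (v j) := by rw [hμu, zero_add]
      rw [hrw]
      exact Submodule.sum_mem _ fun j _ =>
        Submodule.smul_mem _ _ (V.orthogonalProjectionOnto (v j)).2
    set ν : Fin n → ℝ := fun j => if j ∈ P then μ j else -μ j with hν
    have hνv : (∑ j, ν j • b j) = ∑ j, μ j • v j := by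
      refine Finset.sum_congr rfl fun j _ => ?_
      by_cases hj : j ∈ P <;> simp [hν, v, hj, neg_smul, smul_neg]
    rw [← hνv, hV, Finsupp.mem_span_image_iff_linearCombination] at hqV
    obtain ⟨l, hlsupp, hlq⟩ := hqV
    rw [Finsupp.linearCombination_apply, Finsupp.sum_fintype _ _ (fun i => zero_smul ℝ (b i))] at hlq
    have hl0 : ∀ j, j ∉ Z → l j = 0 := by
      intro j hj
      by_contra hc
      exact hj (Finsupp.mem_supported ℝ l |>.mp hlsupp (Finsupp.mem_support_iff.mpr hc))
    refine ⟨fun j => ν j - l j, ?_, ?_, ?_, ?_⟩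
    · calc (∑ j, (ν j - l j) • b j) = (∑ j, ν j • b j) - ∑ j, l j • b j := by
            simp [sub_smul, Finset.sum_sub_distrib]
        _ = 0 := by rw [← hlq, sub_self]
    · intro j hjpos
      have hjpos : 0 < ν j - l j := hjpos
      by_contra hc
      push_neg at hc
      have h1 := hl0 j hc.2
      have h2 : ν j = -μ j := if_neg hc.1
      have := hμ0 j
      rw [h1, h2] at hjpos
      linarith
    · intro j hjneg
      have hjneg : ν j - l j < 0 := hjneg
      by_contra hc
      push_neg at hc
      have h1 := hl0 j hc.2
      rw [h1] at hjneg
      by_cases hjP : j ∈ P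
      · have h2 : ν j = μ j := if_pos hjP
        have := hμ0 j
        rw [h2] at hjneg
        linarith
      · have h2 : ν j = -μ j := if_neg hjP
        rw [h2] at hjneg
        have hμpos : 0 < μ j := by linarith
        have hjS : j ∈ S := by
          by_contra hjS
          rw [hμS j hjS] at hμpos
          exact lt_irrefl 0 hμpos
        rcases Finset.mem_union.mp hjS with h' | h'
        · exact hjP h'
        · exact hc.1 h'
    · have hex : ∃ j, μ j ≠ 0 := by
        by_contra hall
        push_neg at hall
        rw [Finset.sum_congr rfl (fun j _ => hall j)] at hμsum
        simp at hμsum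
      obtain ⟨j, hj⟩ := hex
      have hjS : j ∈ S := by
        by_contra hjS
        exact hj (hμS j hjS)
      have hjPN := Finset.mem_union.mp hjS
      have hjZ : j ∉ Z := by
        rcases hjPN with h' | h'
        · exact Finset.disjoint_left.mp hPZ h'
        · exact Finset.disjoint_left.mp hNZ h'
      refine ⟨j, hjPN, ?_, hjZ⟩
      show ν j - l j ≠ 0
      rw [hl0 j hjZ, sub_zero]
      by_cases hjP : j ∈ P
      · rw [hν]; simpa [hjP] using hj
      · rw [hν]; simpa [hjP] using hj
  · left
    obtain ⟨g, c, hgc, hc0⟩ := geometric_hahn_banach_closed_point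
      (convex_convexHull ℝ _) (((Set.toFinite _).isCompact_convexHull ℝ).isClosed) h0
    rw [g.map_zero] at hc0
    let pt : E →L[ℝ] E := V.subtypeL.comp (V.orthogonalProjectionOnto)
    refine ⟨g.comp (pt - ContinuousLinearMap.id ℝ E), ?_, ?_, ?_⟩
    · intro i hi
      have hiS : i ∈ S := Finset.mem_union_left _ hi
      have hu : u i ∈ convexHull ℝ (u '' (S : Set (Fin n))) :=
        subset_convexHull ℝ _ ⟨i, by exact_mod_cast hiS, rfl⟩
      have hgu := hgc _ hu
      have : g.comp (pt - ContinuousLinearMap.id ℝ E) (b i) = - g (u i) := by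
        have hv : v i = b i := if_pos hi
        rw [ContinuousLinearMap.comp_apply, ← g.map_neg]
        congr 1
        simp only [ContinuousLinearMap.sub_apply, ContinuousLinearMap.id_apply]
        rw [← hv]
        show (pv (v i)) - v i = -(v i - pv (v i))
        abel
      rw [this]
      linarith
    · intro i hi
      have hiS : i ∈ S := Finset.mem_union_right _ hi
      have hiP : i ∉ P := Finset.disjoint_right.mp hPN hi
      have hu : u i ∈ convexHull ℝ (u '' (S : Set (Fin n))) :=
        subset_convexHull ℝ _ ⟨i, by exact_mod_cast hiS, rfl⟩
      have hgu := hgc _ hu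
      have : g.comp (pt - ContinuousLinearMap.id ℝ E) (b i) = g (u i) := by
        have hv : v i = -b i := if_neg hiP
        rw [ContinuousLinearMap.comp_apply]
        congr 1
        simp only [ContinuousLinearMap.sub_apply, ContinuousLinearMap.id_apply]
        have : b i = -v i := by rw [hv, neg_neg]
        rw [this]
        show pv (-v i) - (-v i) = v i - pv (v i)
        have hpv : pv (-v i) = -pv (v i) := by
          show ((V.orthogonalProjectionOnto (-v i) : V) : E) = _
          rw [map_neg]
          rfl
        rw [hpv]
        abel
      rw [this]
      linarith
    · intro j hj
      have hbV : b j ∈ V := Submodule.subset_span ⟨j, by exact_mod_cast hj, rfl⟩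
      rw [ContinuousLinearMap.comp_apply]
      have : (pt - ContinuousLinearMap.id ℝ E) (b j) = 0 := by
        simp only [ContinuousLinearMap.sub_apply, ContinuousLinearMap.id_apply]
        have : pt (b j) = b j := by
          show ((V.orthogonalProjectionOnto (b j) : V) : E) = b j
          exact Submodule.starProjection_eq_self_iff.mpr hbV
        rw [this, sub_self]
      rw [this, g.map_zero]
-- test the snoc / key sum lemma and affine construction pieces
noncomputable def eE (d : ℕ) : (Fin (d+1) → ℝ) ≃ₗ[ℝ] EuclideanSpace ℝ (Fin (d+1)) :=
  (WithLp.linearEquiv 2 ℝ (Fin (d+1) → ℝ)).symm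

lemma key_sum {n d : ℕ} (a : Fin n → (Fin d → ℝ)) (lam : Fin n → ℝ) :
    (∑ i, lam i • (eE d) ((Fin.snoc (a i) 1 : Fin (d+1) → ℝ))) = 0 ↔
      ((∑ i, lam i) = 0 ∧ (∑ i, lam i • a i) = 0) := by
  have hrw : (∑ i, lam i • (eE d) ((Fin.snoc (a i) 1 : Fin (d+1) → ℝ)))
      = (eE d) (∑ i, lam i • (Fin.snoc (a i) 1 : Fin (d+1) → ℝ)) := by
    rw [map_sum]
    exact Finset.sum_congr rfl fun i _ => (map_smul _ _ _).symm
  rw [hrw, map_eq_zero_iff _ (eE d).injective]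
  constructor
  · intro h
    constructor
    · have := congrFun h (Fin.last d)
      simpa [Finset.sum_apply, Fin.snoc_last] using this
    · funext j
      have := congrFun h (Fin.castSucc j)
      simpa [Finset.sum_apply, Fin.snoc_castSucc] using this
  · rintro ⟨hs, ha⟩
    funext x
    induction x using Fin.lastCases with
    | last => simpa [Finset.sum_apply, Fin.snoc_last] using hs
    | cast j =>
      have := congrFun ha j
      simpa [Finset.sum_apply, Fin.snoc_castSucc] using this

noncomputable def snL (d : ℕ) : (Fin d → ℝ) →ₗ[ℝ] (Fin (d+1) → ℝ) where
  toFun x := (Fin.snoc x 0 : Fin (d+1) → ℝ)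
  map_add' x y := by
    funext j
    induction j using Fin.lastCases with
    | last => simp [Fin.snoc_last]
    | cast k => simp [Fin.snoc_castSucc]
  map_smul' c x := by
    funext j
    induction j using Fin.lastCases with
    | last => simp [Fin.snoc_last]
    | cast k => simp [Fin.snoc_castSucc]

noncomputable def affOf {d : ℕ} (h : EuclideanSpace ℝ (Fin (d+1)) →L[ℝ] ℝ) :
    (Fin d → ℝ) →ᵃ[ℝ] ℝ where
  toFun x := h ((eE d) ((Fin.snoc x 1 : Fin (d+1) → ℝ)))
  linear := h.toLinearMap.comp ((eE d).toLinearMap.comp (snL d))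
  map_vadd' p v := by
    have hsnoc : (Fin.snoc (v + p) 1 : Fin (d+1) → ℝ) = Fin.snoc v 0 + Fin.snoc p 1 := by
      funext j
      induction j using Fin.lastCases with
      | last => simp [Fin.snoc_last]
      | cast k => simp [Fin.snoc_castSucc]
    show h ((eE d) ((Fin.snoc (v + p) 1 : Fin (d+1) → ℝ))) = _
    rw [hsnoc, map_add, map_add]
    rfl

lemma affOf_apply {d : ℕ} (h : EuclideanSpace ℝ (Fin (d+1)) →L[ℝ] ℝ) (x : Fin d → ℝ) :
    affOf h x = h ((eE d) ((Fin.snoc x 1 : Fin (d+1) → ℝ))) := rfl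

/-- The tiles `[X1,Y1]` and `[X2,Y2]` are separated with respect to `a`:
there is an affine functional positive on `(X1 \ X2) ∪ (Y1 \ Y2)`, negative on
`(X2 \ X1) ∪ (Y2 \ Y1)` and zero on `(Y1 ∩ Y2) \ (X1 ∪ X2)`. -/
def SeparatedTiles {n d : ℕ} (a : Fin n → (Fin d → ℝ))
    (X1 Y1 X2 Y2 : Finset (Fin n)) : Prop :=
  ∃ f : (Fin d → ℝ) →ᵃ[ℝ] ℝ,
    (∀ i ∈ (X1 \ X2) ∪ (Y1 \ Y2), 0 < f (a i)) ∧
    (∀ i ∈ (X2 \ X1) ∪ (Y2 \ Y1), f (a i) < 0) ∧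
    (∀ i ∈ (Y1 ∩ Y2) \ (X1 ∪ X2), f (a i) = 0)

set_option maxHeartbeats 1000000 in
theorem separated_iff_no_circuit {n d : ℕ} (a : Fin n → (Fin d → ℝ))
    (X1 Y1 X2 Y2 : Finset (Fin n)) (h1 : X1 ⊆ Y1) (h2 : X2 ⊆ Y2) :
    SeparatedTiles a X1 Y1 X2 Y2 ↔
      ¬ ∃ lam : Fin n → ℝ, lam ≠ 0 ∧
        (∑ i, lam i) = 0 ∧ (∑ i, lam i • a i) = 0 ∧
        (∀ i, 0 < lam i → i ∈ Y1 \ X2) ∧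
        (∀ i, lam i < 0 → i ∈ Y2 \ X1) ∧
        (∃ i, lam i ≠ 0 ∧ i ∉ (Y1 ∩ Y2) \ (X1 ∪ X2)) := by
  classical
  set P := (X1 \ X2) ∪ (Y1 \ Y2) with hP
  set N := (X2 \ X1) ∪ (Y2 \ Y1) with hN
  set Z := (Y1 ∩ Y2) \ (X1 ∪ X2) with hZ
  have hPsub : ∀ i ∈ P, i ∈ Y1 \ X2 := by
    intro i hi
    have h1i := @h1 i
    have h2i := @h2 i
    simp only [hP, Finset.mem_union, Finset.mem_sdiff] at hi ⊢
    tauto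
  have hNsub : ∀ i ∈ N, i ∈ Y2 \ X1 := by
    intro i hi
    have h1i := @h1 i
    have h2i := @h2 i
    simp only [hN, Finset.mem_union, Finset.mem_sdiff] at hi ⊢
    tauto
  have hZsub1 : ∀ i ∈ Z, i ∈ Y1 \ X2 := by
    intro i hi
    simp only [hZ, Finset.mem_sdiff, Finset.mem_inter, Finset.mem_union] at hi ⊢
    tauto
  have hZsub2 : ∀ i ∈ Z, i ∈ Y2 \ X1 := by
    intro i hi
    simp only [hZ, Finset.mem_sdiff, Finset.mem_inter, Finset.mem_union] at hi ⊢
    tauto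
  have hcov1 : ∀ i ∈ Y1 \ X2, i ∈ P ∨ i ∈ Z := by
    intro i hi
    simp only [hP, hZ, Finset.mem_union, Finset.mem_sdiff, Finset.mem_inter] at hi ⊢
    by_cases hY2 : i ∈ Y2 <;> by_cases hX1 : i ∈ X1 <;> tauto
  have hcov2 : ∀ i ∈ Y2 \ X1, i ∈ N ∨ i ∈ Z := by
    intro i hi
    simp only [hN, hZ, Finset.mem_union, Finset.mem_sdiff, Finset.mem_inter] at hi ⊢
    by_cases hY1 : i ∈ Y1 <;> by_cases hX2 : i ∈ X2 <;> tauto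
  have hPN : Disjoint P N := by
    rw [Finset.disjoint_left]
    intro i hiP hiN
    have h1i := @h1 i
    have h2i := @h2 i
    simp only [hP, hN, Finset.mem_union, Finset.mem_sdiff] at hiP hiN
    tauto
  have hPZ : Disjoint P Z := by
    rw [Finset.disjoint_left]
    intro i hiP hiZ
    simp only [hP, hZ, Finset.mem_union, Finset.mem_sdiff, Finset.mem_inter] at hiP hiZ
    tauto
  have hNZ : Disjoint N Z := by
    rw [Finset.disjoint_left]
    intro i hiN hiZ
    simp only [hN, hZ, Finset.mem_union, Finset.mem_sdiff, Finset.mem_inter] at hiN hiZ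
    tauto
  constructor
  · rintro ⟨f, hfP, hfN, hfZ⟩ ⟨lam, hlam0, hsum, hsuma, hpos, hneg, i₀, hi₀ne, hi₀Z⟩
    have hfa : ∀ x : Fin d → ℝ, f x = f.linear x + f 0 := by
      intro x
      have := f.map_vadd (0 : Fin d → ℝ) x
      simpa using this
    have hsum0 : (∑ i, lam i * f (a i)) = 0 := by
      calc (∑ i, lam i * f (a i))
          = ∑ i, (lam i * f.linear (a i) + lam i * f 0) := by
            refine Finset.sum_congr rfl fun i _ => ?_
            rw [hfa (a i), mul_add]
        _ = (∑ i, lam i * f.linear (a i)) + (∑ i, lam i) * f 0 := by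
            rw [Finset.sum_add_distrib, Finset.sum_mul]
        _ = f.linear (∑ i, lam i • a i) + (∑ i, lam i) * f 0 := by
            rw [map_sum]
            congr 1
            refine Finset.sum_congr rfl fun i _ => ?_
            simp [map_smul, smul_eq_mul]
        _ = 0 := by rw [hsuma, hsum, map_zero, zero_mul, add_zero]
    have hterm : ∀ i, 0 ≤ lam i * f (a i) := by
      intro i
      rcases lt_trichotomy (lam i) 0 with h | h | h
      · have hi := hneg i h
        have hfle : f (a i) ≤ 0 := by
          rcases hcov2 i hi with h' | h'
          · exact le_of_lt (hfN i h')
          · exact le_of_eq (hfZ i h')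
        nlinarith
      · simp [h]
      · have hi := hpos i h
        have hfge : 0 ≤ f (a i) := by
          rcases hcov1 i hi with h' | h'
          · exact le_of_lt (hfP i h')
          · exact ge_of_eq (hfZ i h')
        positivity
    have hall := (Finset.sum_eq_zero_iff_of_nonneg (fun i _ => hterm i)).mp hsum0
    have h0 : lam i₀ * f (a i₀) = 0 := hall i₀ (Finset.mem_univ _)
    have hfa0 : f (a i₀) = 0 := by
      rcases mul_eq_zero.mp h0 with h | h
      · exact absurd h hi₀ne
      · exact h
    rcases hi₀ne.lt_or_gt with h | h
    · rcases hcov2 i₀ (hneg i₀ h) with h' | h'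
      · exact absurd hfa0 (ne_of_lt (hfN i₀ h'))
      · exact hi₀Z h'
    · rcases hcov1 i₀ (hpos i₀ h) with h' | h'
      · exact absurd hfa0.symm (ne_of_lt (hfP i₀ h'))
      · exact hi₀Z h'
  · intro hno
    rcases motzkin_aux (fun i => (eE d) ((Fin.snoc (a i) 1 : Fin (d+1) → ℝ))) P N Z hPN hPZ hNZ with
      ⟨h, hhP, hhN, hhZ⟩ | ⟨lam, hsum, hpos, hneg, i, hiPN, hine, hiZ⟩
    · exact ⟨affOf h, hhP, hhN, hhZ⟩
    · exfalso
      apply hno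
      obtain ⟨hs, ha⟩ := (key_sum a lam).mp hsum
      refine ⟨lam, ?_, hs, ha, ?_, ?_, ⟨i, hine, hiZ⟩⟩
      · intro h0
        exact hine (congrFun h0 i)
      · intro j hj
        rcases hpos j hj with h' | h'
        · exact hPsub j h'
        · exact hZsub1 j h'
      · intro j hj
        rcases hneg j hj with h' | h'
        · exact hNsub j h'
        · exact hZsub2 j h'
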